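/- Let m ≥ 1 be an integer and let n ≥ 1 be an integer with m ≤ 2^{n+1} − 3. Then ν_2(B(2,m,n)) ≥ −(2m+1); equivalently, 2^{2m+1} · B(2,m,n) is an integer. -/

import Mathlib

/-- Generalized binomial coefficient `C_j(x) = x(x-1)⋯(x-j+1)/j!`, with `C_0(x) = 1`. -/
noncomputable def genBinom (x : ℚ) (j : ℕ) : ℚ :=
  (∏ i ∈ Finset.range j, (x - (i : ℚ))) / (Nat.factorial j : ℚ)

/-- The Ewing–Schober combinatorial formula `B(d,m,n)`: the sum is over all tuples
`(j_1,…,j_n)` of nonnegative integers (here `j : Fin n → ℕ`, 0-indexed, so `j k`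
corresponds to `j_{k+1}`) satisfying `Σ_{k=1}^n (d^{n-k+1} - 1) j_k = m + 1`, of
`Π_{k=1}^n C_{j_k}(m/d^{n-k+1} - Σ_{l=1}^{k-1} d^{k-l} j_l)`, multiplied by `-(1/m)`. -/
noncomputable def multibrotB (d m n : ℕ) : ℚ :=
  -(1 / (m : ℚ)) * ∑ᶠ j : Fin n → ℕ,
    if (∑ k : Fin n, (d ^ (n - k.val) - 1) * j k) = m + 1 then
      ∏ k : Fin n,
        genBinom ((m : ℚ) / (d : ℚ) ^ (n - k.val)
          - ∑ l ∈ Finset.univ.filter (fun l : Fin n => l < k),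
              (d : ℚ) ^ (k.val - l.val) * ((j l : ℕ) : ℚ)) (j k)
    else 0

namespace ES

open Finset

/-- The integer `M_k = m - ∑_{l<k} 2^{n-l} j_l`. -/
def MM (m n : ℕ) (j : ℕ → ℕ) (k : ℕ) : ℤ :=
  (m : ℤ) - ∑ l ∈ Finset.range k, 2 ^ (n - l) * (j l : ℤ)

/-- The integer numerator `N_k = ∏_{t<j_k} (M_k - t 2^{n-k})`. -/
def NN (m n : ℕ) (j : ℕ → ℕ) (k : ℕ) : ℤ :=
  ∏ t ∈ Finset.range (j k), (MM m n j k - t * 2 ^ (n - k))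

lemma MM_succ (m n : ℕ) (j : ℕ → ℕ) (k : ℕ) :
    MM m n j (k + 1) = MM m n j k - 2 ^ (n - k) * (j k : ℤ) := by
  simp [MM, Finset.sum_range_succ]; ring


lemma genBinom_cast' (M : ℤ) (e jj : ℕ) :
    genBinom ((M : ℚ) / 2 ^ e) jj
      = ((∏ t ∈ Finset.range jj, (M - t * 2 ^ e) : ℤ) : ℚ)
        / ((2 : ℚ) ^ (e * jj) * (Nat.factorial jj : ℚ)) := by
  unfold genBinom
  have h2 : (2 : ℚ) ^ e ≠ 0 := by positivity
  have hprod : ∀ i ∈ Finset.range jj, (M : ℚ) / 2 ^ e - (i : ℚ)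
      = (((M - i * 2 ^ e : ℤ) : ℚ)) / 2 ^ e := by
    intro i _
    push_cast
    field_simp
  rw [Finset.prod_congr rfl hprod, Finset.prod_div_distrib, Finset.prod_const, Int.cast_prod,
    Finset.card_range, div_div, ← pow_mul, mul_comm e jj]

lemma fin_filter_sum' {M : Type*} [AddCommMonoid M] {n : ℕ} (k : Fin n) (f : ℕ → M) :
    ∑ l ∈ Finset.univ.filter (fun l : Fin n => l < k), f l.val
      = ∑ i ∈ Finset.range k.val, f i := by
  rw [Finset.sum_filter]
  have h1 : ∑ l : Fin n, (if l < k then f l.val else 0)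
      = ∑ i ∈ Finset.range n, (if i < k.val then f i else 0) := by
    rw [← Fin.sum_univ_eq_sum_range (fun i => if i < k.val then f i else 0) n]
    exact Finset.sum_congr rfl fun l _ => by simp only [Fin.lt_def]
  rw [h1, Finset.sum_ite, Finset.sum_const, smul_zero, add_zero]
  apply Finset.sum_congr _ (fun x _ => rfl)
  ext i
  simp only [Finset.mem_filter, Finset.mem_range]
  exact ⟨fun h => h.2, fun h => ⟨lt_trans h k.isLt, h⟩⟩

lemma padicValNat_two_factorial_le' (jj : ℕ) : padicValNat 2 (Nat.factorial jj) ≤ jj := by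
  have h := sub_one_mul_padicValNat_factorial (p := 2) jj
  have hd := Nat.digit_sum_le 2 jj
  omega

lemma padicValNat_two_factorial_lt' (jj : ℕ) (h : 1 ≤ jj) :
    padicValNat 2 (Nat.factorial jj) + 1 ≤ jj := by
  have heq := sub_one_mul_padicValNat_factorial (p := 2) jj
  have hd := Nat.digit_sum_le 2 jj
  have hne : Nat.digits 2 jj ≠ [] := Nat.digits_ne_nil_iff_ne_zero.mpr (by omega)
  have hlast : (Nat.digits 2 jj).getLast hne ≠ 0 := Nat.getLast_digit_ne_zero 2 (by omega)
  have hmem := List.getLast_mem hne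
  have hle := List.single_le_sum (l := Nat.digits 2 jj) (fun x _ => Nat.zero_le x) _ hmem
  omega

lemma count_le_choose' (p : ℕ) [Fact p.Prime] (u jj a : ℕ) (hju : jj ≤ u) :
    ((Finset.Icc 1 a).filter fun i => p ^ i ≤ jj % p ^ i + (u - jj) % p ^ i).card
      ≤ padicValNat p (u.choose jj) := by
  rw [padicValNat_choose (b := max (a + 1) (Nat.log p u + 1)) hju
    (lt_of_lt_of_le (Nat.lt_succ_self _) (le_max_right _ _))]
  apply Finset.card_le_card
  intro i hi
  simp only [Finset.mem_filter, Finset.mem_Icc, Finset.mem_Ico] at hi ⊢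
  refine ⟨⟨hi.1.1, ?_⟩, hi.2⟩
  have := le_max_left (a + 1) (Nat.log p u + 1)
  omega

lemma exists_u' (p : ℕ) (hp : p.Prime) (hp2 : p ≠ 2) (M : ℤ) (e jj G : ℕ) :
    ∃ u : ℕ, jj ≤ u ∧ (p : ℤ) ^ G ∣ M - 2 ^ e * u := by
  rcases Nat.eq_zero_or_pos G with hG | hG
  · exact ⟨jj, le_refl _, by simp [hG]⟩
  have hco : Nat.Coprime (2 ^ e) (p ^ G) :=
    Nat.Coprime.pow e G ((Nat.coprime_primes Nat.prime_two hp).mpr (Ne.symm hp2))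
  have hk : 1 < p ^ G := Nat.one_lt_pow (by omega) hp.one_lt
  obtain ⟨v, -, hv⟩ := Nat.exists_mul_mod_eq_one_of_coprime hco hk
  have hq0 : (0 : ℤ) < (p : ℤ) ^ G := by
    have : (0 : ℤ) < (p : ℤ) := by exact_mod_cast hp.pos
    positivity
  set w : ℤ := M % ((p : ℤ) ^ G) with hwdef
  have hdw : ((p : ℤ) ^ G) ∣ M - w := by
    rw [hwdef, Int.emod_def]; ring_nf; exact Dvd.intro _ rfl
  have hw0 : 0 ≤ w := Int.emod_nonneg M (by positivity)
  have hv' : ((p : ℤ) ^ G) ∣ (2 : ℤ) ^ e * v - 1 := by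
    have hsplit : 2 ^ e * v = p ^ G * (2 ^ e * v / p ^ G) + 1 := by
      conv_lhs => rw [← Nat.div_add_mod (2 ^ e * v) (p ^ G)]
      rw [hv]
    refine ⟨(2 ^ e * v / p ^ G : ℕ), ?_⟩
    have := congrArg (fun x : ℕ => (x : ℤ)) hsplit
    push_cast at this ⊢
    linarith
  refine ⟨v * w.toNat + p ^ G * jj, le_trans (Nat.le_mul_of_pos_left jj (by positivity)) (Nat.le_add_left _ _) , ?_⟩
  have htn : ((w.toNat : ℤ)) = w := Int.toNat_of_nonneg hw0
  have hexp : M - 2 ^ e * ((v * w.toNat + p ^ G * jj : ℕ) : ℤ)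
      = (M - w) - (2 ^ e * v - 1) * w - ((p : ℤ) ^ G) * (2 ^ e * jj) := by
    push_cast [htn]
    ring
  rw [hexp]
  exact dvd_sub (dvd_sub hdw (hv'.mul_right w)) (Dvd.intro _ rfl)

lemma prod_sub_prod_dvd' {α : Type*} (s : Finset α) (d : ℤ) (f g : α → ℤ)
    (h : ∀ x ∈ s, d ∣ f x - g x) :
    d ∣ (∏ x ∈ s, f x) - ∏ x ∈ s, g x := by
  classical
  induction s using Finset.induction with
  | empty => simp
  | @insert a s ha ih =>
    rw [Finset.prod_insert ha, Finset.prod_insert ha]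
    have key : f a * ∏ x ∈ s, f x - g a * ∏ x ∈ s, g x
        = f a * ((∏ x ∈ s, f x) - ∏ x ∈ s, g x) + (f a - g a) * ∏ x ∈ s, g x := by ring
    rw [key]
    exact dvd_add (Dvd.dvd.mul_left (ih fun x hx => h x (Finset.mem_insert_of_mem hx)) _)
      (Dvd.dvd.mul_right (h a (Finset.mem_insert_self a s)) _)

lemma NN_pow_dvd' (p : ℕ) (hp : p.Prime) (M : ℤ) (e jj u G : ℕ) (hju : jj ≤ u)
    (hG : (p : ℤ) ^ G ∣ M - 2 ^ e * u) :
    (p : ℤ) ^ (min G (padicValNat p (Nat.descFactorial u jj)))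
      ∣ ∏ t ∈ Finset.range jj, (M - t * 2 ^ e) := by
  have h1 : (p : ℤ) ^ G ∣ (∏ t ∈ Finset.range jj, (M - t * 2 ^ e))
      - ∏ t ∈ Finset.range jj, (2 ^ e * ((u : ℤ) - t)) := by
    apply prod_sub_prod_dvd'
    intro t _
    have : (M - t * 2 ^ e) - 2 ^ e * ((u : ℤ) - t) = M - 2 ^ e * u := by ring
    rw [this]; exact hG
  have h2 : ∏ t ∈ Finset.range jj, ((2 : ℤ) ^ e * ((u : ℤ) - t))
      = 2 ^ (e * jj) * (Nat.descFactorial u jj : ℤ) := by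
    rw [Finset.prod_mul_distrib, Finset.prod_const, Finset.card_range, ← pow_mul,
      Nat.descFactorial_eq_prod_range, Nat.cast_prod]
    congr 1
    apply Finset.prod_congr rfl
    intro t ht
    have : t ≤ u := le_trans (le_of_lt (Finset.mem_range.mp ht)) hju
    push_cast [Nat.cast_sub this]
    ring
  have h3 : (p : ℤ) ^ (min G (padicValNat p (Nat.descFactorial u jj)))
      ∣ 2 ^ (e * jj) * (Nat.descFactorial u jj : ℤ) := by
    apply Dvd.dvd.mul_left
    have hdvd : (p : ℕ) ^ (padicValNat p (Nat.descFactorial u jj)) ∣ Nat.descFactorial u jj :=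
      pow_padicValNat_dvd
    have := Int.natCast_dvd_natCast.mpr hdvd
    push_cast at this
    exact dvd_trans (pow_dvd_pow _ (min_le_right _ _)) this
  have heq : (∏ t ∈ Finset.range jj, (M - t * 2 ^ e))
      = ((∏ t ∈ Finset.range jj, (M - t * 2 ^ e)) - ∏ t ∈ Finset.range jj, (2 ^ e * ((u : ℤ) - t)))
        + 2 ^ (e * jj) * (Nat.descFactorial u jj : ℤ) := by
    rw [← h2]; ring
  rw [heq]
  exact dvd_add (dvd_trans (pow_dvd_pow _ (min_le_left _ _)) h1) h3

lemma odd_le' (p : ℕ) (hp : p.Prime) (hp2 : p ≠ 2) (m n : ℕ) (j : ℕ → ℕ) (hm : 1 ≤ m)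
    (hc : ∑ k ∈ Finset.range n, (2 ^ (n - k) - 1) * j k = m + 1)
    (hN : ∀ k ∈ Finset.range n, NN m n j k ≠ 0) :
    padicValNat p m + ∑ k ∈ Finset.range n, padicValNat p (Nat.factorial (j k)) ≤
      ∑ k ∈ Finset.range n, padicValNat p (NN m n j k).natAbs := by
  haveI : Fact p.Prime := ⟨hp⟩
  set a := padicValNat p m with ha
  have hchoice : ∀ k : ℕ, ∃ u : ℕ, j k ≤ u ∧
      (p : ℤ) ^ (padicValNat p (Nat.factorial (j k)) + a + 1)
        ∣ MM m n j k - 2 ^ (n - k) * u :=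
    fun k => exists_u' p hp hp2 _ _ _ _
  choose u hu1 hu2 using hchoice
  set cnt : ℕ → ℕ := fun k =>
    ((Finset.Icc 1 a).filter fun i => p ^ i ≤ (j k) % p ^ i + (u k - j k) % p ^ i).card with hcnt
  -- per-factor bound
  have hperf : ∀ k ∈ Finset.range n,
      padicValNat p (Nat.factorial (j k)) + cnt k ≤ padicValNat p (NN m n j k).natAbs := by
    intro k hk
    have hcnt_le : cnt k ≤ a := by
      refine le_trans (Finset.card_filter_le _ _) ?_
      simp [Nat.card_Icc]
    have hch : cnt k ≤ padicValNat p ((u k).choose (j k)) := count_le_choose' p _ _ _ (hu1 k)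
    have hdesc : padicValNat p (Nat.descFactorial (u k) (j k))
        = padicValNat p (Nat.factorial (j k)) + padicValNat p ((u k).choose (j k)) := by
      rw [Nat.descFactorial_eq_factorial_mul_choose,
        padicValNat.mul (Nat.factorial_ne_zero _) ((Nat.choose_pos (hu1 k)).ne')]
    have hdvd := NN_pow_dvd' p hp (MM m n j k) (n - k) (j k) (u k) _ (hu1 k) (hu2 k)
    have hmin : padicValNat p (Nat.factorial (j k)) + cnt k
        ≤ min (padicValNat p (Nat.factorial (j k)) + a + 1)
            (padicValNat p (Nat.descFactorial (u k) (j k))) := by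
      refine le_min (by omega) ?_
      rw [hdesc]; omega
    have hNk : (NN m n j k).natAbs ≠ 0 := Int.natAbs_ne_zero.mpr (hN k hk)
    have hdvd2 : (p : ℕ) ^ (padicValNat p (Nat.factorial (j k)) + cnt k)
        ∣ (NN m n j k).natAbs := by
      have h := dvd_trans (pow_dvd_pow _ hmin) hdvd
      have h2 : ((p ^ (padicValNat p (Nat.factorial (j k)) + cnt k) : ℕ) : ℤ)
          ∣ NN m n j k := by push_cast; exact h
      have h3 := Int.natAbs_dvd_natAbs.mpr h2
      rwa [Int.natAbs_natCast] at h3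
    have := (Nat.Prime.pow_dvd_iff_le_factorization hp hNk).mp hdvd2
    rwa [Nat.factorization_def _ hp] at this
  -- covering
  have hcov : ∀ i ∈ Finset.Icc 1 a, ∃ k ∈ Finset.range n,
      p ^ i ≤ (j k) % p ^ i + (u k - j k) % p ^ i := by
    intro i hi
    rw [Finset.mem_Icc] at hi
    by_contra hcon
    push_neg at hcon
    have chain : ∀ k, k ≤ n →
        ((p : ℤ) ^ i ∣ MM m n j k ∧ (p : ℕ) ^ i ∣ ∑ l ∈ Finset.range k, j l) := by
      intro k
      induction k with
      | zero =>
        intro _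
        constructor
        · have h1 : (p : ℕ) ^ i ∣ m := dvd_trans (pow_dvd_pow p hi.2) pow_padicValNat_dvd
          have : ((p ^ i : ℕ) : ℤ) ∣ ((m : ℕ) : ℤ) := Int.natCast_dvd_natCast.mpr h1
          push_cast at this
          simpa [MM] using this
        · simp
      | succ k ih =>
        intro hk1
        have hk : k < n := by omega
        obtain ⟨hM, hJ⟩ := ih (by omega)
        have h2u : (p : ℤ) ^ i ∣ 2 ^ (n - k) * (u k : ℤ) := by
          have hrw : (2 : ℤ) ^ (n - k) * (u k : ℤ)
              = MM m n j k - (MM m n j k - 2 ^ (n - k) * (u k : ℤ)) := by ring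
          rw [hrw]
          exact dvd_sub hM (dvd_trans (pow_dvd_pow _ (by omega)) (hu2 k))
        have hcop : IsCoprime ((p : ℤ) ^ i) ((2 : ℤ) ^ (n - k)) := by
          have : Nat.Coprime (p ^ i) (2 ^ (n - k)) :=
            Nat.Coprime.pow i (n - k) ((Nat.coprime_primes hp Nat.prime_two).mpr hp2)
          have h := Nat.isCoprime_iff_coprime.mpr this
          push_cast at h
          exact h
        have hpu : (p : ℕ) ^ i ∣ u k := by
          have : (p : ℤ) ^ i ∣ ((u k : ℕ) : ℤ) := hcop.dvd_of_dvd_mul_left h2u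
          exact_mod_cast this
        have humod : u k % p ^ i = 0 := (Nat.mod_eq_zero_of_dvd hpu : _)
        have hsplit : j k + (u k - j k) = u k := Nat.add_sub_cancel' (hu1 k)
        have hcar := hcon k (Finset.mem_range.mpr hk)
        have hmod0 : (j k % p ^ i + (u k - j k) % p ^ i) % p ^ i = 0 := by
          rw [← Nat.add_mod, hsplit, humod]
        rw [Nat.mod_eq_of_lt hcar] at hmod0
        have hji : (p : ℕ) ^ i ∣ j k :=
          Nat.dvd_of_mod_eq_zero (Nat.eq_zero_of_add_eq_zero_right hmod0)

        constructor
        · rw [MM_succ]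
          refine dvd_sub hM (Dvd.dvd.mul_left ?_ _)
          exact_mod_cast Int.natCast_dvd_natCast.mpr hji
        · rw [Finset.sum_range_succ]
          exact dvd_add hJ hji
    obtain ⟨hMn, hJn⟩ := chain n (le_refl n)
    -- MM n = -(1 + Σ j)
    have hcast : ∑ l ∈ Finset.range n, ((2 : ℤ) ^ (n - l) - 1) * (j l : ℤ) = (m : ℤ) + 1 := by
      have hcg := congrArg (Nat.cast : ℕ → ℤ) hc
      push_cast at hcg
      rw [← hcg]
      apply Finset.sum_congr rfl
      intro l _
      have h1 : (1 : ℕ) ≤ 2 ^ (n - l) := Nat.one_le_two_pow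
      push_cast [Nat.cast_sub h1]
      ring
    have hsum2 : ∑ l ∈ Finset.range n, (2 : ℤ) ^ (n - l) * (j l : ℤ)
        = (m : ℤ) + 1 + ∑ l ∈ Finset.range n, (j l : ℤ) := by
      have hexp : ∑ l ∈ Finset.range n, ((2 : ℤ) ^ (n - l) - 1) * (j l : ℤ)
          = ∑ l ∈ Finset.range n, (2 : ℤ) ^ (n - l) * (j l : ℤ)
            - ∑ l ∈ Finset.range n, (j l : ℤ) := by
        rw [← Finset.sum_sub_distrib]
        apply Finset.sum_congr rfl
        intro l _
        ring
      rw [hexp] at hcast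
      linarith
    have hMn_eq : MM m n j n = -(1 + ∑ l ∈ Finset.range n, (j l : ℤ)) := by
      simp only [MM, hsum2]
      ring
    have hd1 : (p : ℤ) ^ i ∣ (1 : ℤ) := by
      have hJZ : (p : ℤ) ^ i ∣ (∑ l ∈ Finset.range n, (j l : ℤ)) := by
        have := Int.natCast_dvd_natCast.mpr hJn
        push_cast at this
        exact this
      have hrw : (1 : ℤ) = -(MM m n j n) - ∑ l ∈ Finset.range n, (j l : ℤ) := by
        rw [hMn_eq]; ring
      rw [hrw]
      exact dvd_sub (dvd_neg.mpr hMn) hJZ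
    have hple : (p : ℕ) ^ i ∣ 1 := by exact_mod_cast hd1
    have := Nat.le_of_dvd one_pos hple
    have hgt : 1 < p ^ i := Nat.one_lt_pow (by omega) hp.one_lt
    omega
  -- counting
  have hcount : a ≤ ∑ k ∈ Finset.range n, cnt k := by
    have hsub : Finset.Icc 1 a ⊆ (Finset.range n).biUnion
        (fun k => (Finset.Icc 1 a).filter
          (fun i => p ^ i ≤ (j k) % p ^ i + (u k - j k) % p ^ i)) := by
      intro i hi
      obtain ⟨k, hk, hcond⟩ := hcov i hi
      exact Finset.mem_biUnion.mpr ⟨k, hk, Finset.mem_filter.mpr ⟨hi, hcond⟩⟩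
    calc a = (Finset.Icc 1 a).card := by simp [Nat.card_Icc]
      _ ≤ _ := Finset.card_le_card hsub
      _ ≤ ∑ k ∈ Finset.range n, cnt k := Finset.card_biUnion_le
  calc padicValNat p m + ∑ k ∈ Finset.range n, padicValNat p (Nat.factorial (j k))
      ≤ ∑ k ∈ Finset.range n, (padicValNat p (Nat.factorial (j k)) + cnt k) := by
        rw [Finset.sum_add_distrib]
        omega
    _ ≤ ∑ k ∈ Finset.range n, padicValNat p (NN m n j k).natAbs :=
        Finset.sum_le_sum hperf

lemma two_le' (m n : ℕ) (j : ℕ → ℕ) (hm : 1 ≤ m)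
    (hc : ∑ k ∈ Finset.range n, (2 ^ (n - k) - 1) * j k = m + 1)
    (hN : ∀ k ∈ Finset.range n, NN m n j k ≠ 0) :
    padicValNat 2 m + (∑ k ∈ Finset.range n, (n - k) * j k)
        + ∑ k ∈ Finset.range n, padicValNat 2 (Nat.factorial (j k)) ≤
      (2 * m + 1) + ∑ k ∈ Finset.range n, padicValNat 2 (NN m n j k).natAbs := by
  set a := padicValNat 2 m with ha
  -- per-factor divisibility: 2 ^ (min a (n-k) * j k) ∣ NN k
  have hperf : ∀ k ∈ Finset.range n,
      min a (n - k) * j k ≤ padicValNat 2 (NN m n j k).natAbs := by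
    intro k hk
    have hfac : ∀ t ∈ Finset.range (j k), (2 : ℤ) ^ (min a (n - k))
        ∣ (MM m n j k - t * 2 ^ (n - k)) := by
      intro t _
      have hdm : (2 : ℤ) ^ (min a (n - k)) ∣ (m : ℤ) := by
        have h1 : (2 : ℕ) ^ a ∣ m := pow_padicValNat_dvd
        have h2 : ((2 ^ a : ℕ) : ℤ) ∣ ((m : ℕ) : ℤ) := Int.natCast_dvd_natCast.mpr h1
        push_cast at h2
        exact dvd_trans (pow_dvd_pow _ (min_le_left _ _)) h2
      have hds : (2 : ℤ) ^ (min a (n - k)) ∣ ∑ l ∈ Finset.range k, 2 ^ (n - l) * (j l : ℤ) := by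
        apply Finset.dvd_sum
        intro l hl
        have hle : min a (n - k) ≤ n - l := by
          have : n - k ≤ n - l := Nat.sub_le_sub_left (le_of_lt (Finset.mem_range.mp hl)) n
          omega
        exact Dvd.dvd.mul_right (pow_dvd_pow _ hle) _
      have hdt : (2 : ℤ) ^ (min a (n - k)) ∣ (t : ℤ) * 2 ^ (n - k) :=
        Dvd.dvd.mul_left (pow_dvd_pow _ (min_le_right _ _)) _
      exact dvd_sub (dvd_sub hdm hds) hdt
    have hdvd : (2 : ℤ) ^ (min a (n - k) * j k) ∣ NN m n j k := by
      have hrw : (2 : ℤ) ^ (min a (n - k) * j k)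
          = ∏ _t ∈ Finset.range (j k), (2 : ℤ) ^ (min a (n - k)) := by
        rw [Finset.prod_const, Finset.card_range, ← pow_mul, mul_comm]
      rw [hrw]
      exact Finset.prod_dvd_prod_of_dvd _ _ fun t ht => hfac t ht
    have hNk : (NN m n j k).natAbs ≠ 0 := Int.natAbs_ne_zero.mpr (hN k hk)
    have hdvd2 : (2 : ℕ) ^ (min a (n - k) * j k) ∣ (NN m n j k).natAbs := by
      have h2 : ((2 ^ (min a (n - k) * j k) : ℕ) : ℤ) ∣ NN m n j k := by push_cast; exact hdvd
      have h3 := Int.natAbs_dvd_natAbs.mpr h2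
      rwa [Int.natAbs_natCast] at h3
    have := (Nat.Prime.pow_dvd_iff_le_factorization Nat.prime_two hNk).mp hdvd2
    rwa [Nat.factorization_def _ Nat.prime_two] at this
  -- counting part
  have hsum1 : ∑ k ∈ Finset.range n, (n - k) * j k ≤ m + 1 := by
    rw [← hc]
    apply Finset.sum_le_sum
    intro k _
    have := @Nat.lt_two_pow_self (n - k)
    exact Nat.mul_le_mul_right _ (by omega)
  have hsumj : ∑ k ∈ Finset.range n, j k ≤ m + 1 := by
    rw [← hc]
    apply Finset.sum_le_sum
    intro k hk
    have h1 : 1 ≤ n - k := by have := Finset.mem_range.mp hk; omega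
    have h2 : 2 ≤ 2 ^ (n - k) := by
      calc 2 = 2 ^ 1 := by norm_num
        _ ≤ 2 ^ (n - k) := Nat.pow_le_pow_right (by norm_num) h1
    calc j k = 1 * j k := (one_mul _).symm
      _ ≤ (2 ^ (n - k) - 1) * j k := Nat.mul_le_mul_right _ (by omega)
  have ham : a ≤ m := by
    have h1 : (2 : ℕ) ^ a ∣ m := pow_padicValNat_dvd
    have h2 : 2 ^ a ≤ m := Nat.le_of_dvd (by omega) h1
    have h3 := @Nat.lt_two_pow_self a
    omega
  -- main arithmetic split on a = 0
  have harith : a + (∑ k ∈ Finset.range n, (n - k) * j k)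
      + ∑ k ∈ Finset.range n, padicValNat 2 (Nat.factorial (j k))
      ≤ (2 * m + 1) + ∑ k ∈ Finset.range n, min a (n - k) * j k := by
    rcases Nat.eq_zero_or_pos a with ha0 | ha1
    · -- a = 0
      have hex : ∃ k0 ∈ Finset.range n, 1 ≤ j k0 := by
        by_contra hno
        push_neg at hno
        have : ∑ k ∈ Finset.range n, (2 ^ (n - k) - 1) * j k = 0 := by
          apply Finset.sum_eq_zero
          intro k hk
          have := hno k hk
          have : j k = 0 := by omega
          simp [this]
        omega
      obtain ⟨k0, hk0, hjk0⟩ := hex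
      have hv2sum : (∑ k ∈ Finset.range n, padicValNat 2 (Nat.factorial (j k))) + 1
          ≤ ∑ k ∈ Finset.range n, j k := by
        have e1 : ∑ k ∈ Finset.range n, padicValNat 2 (Nat.factorial (j k))
            = padicValNat 2 (Nat.factorial (j k0))
              + ∑ k ∈ (Finset.range n).erase k0, padicValNat 2 (Nat.factorial (j k)) :=
          (Finset.add_sum_erase _ _ hk0).symm
        have e2 : ∑ k ∈ Finset.range n, j k
            = j k0 + ∑ k ∈ (Finset.range n).erase k0, j k :=
          (Finset.add_sum_erase _ _ hk0).symm
        have e3 : ∑ k ∈ (Finset.range n).erase k0, padicValNat 2 (Nat.factorial (j k))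
            ≤ ∑ k ∈ (Finset.range n).erase k0, j k :=
          Finset.sum_le_sum fun k _ => padicValNat_two_factorial_le' (j k)
        have e4 := padicValNat_two_factorial_lt' (j k0) hjk0
        omega
      simp only [ha0, Nat.zero_min, zero_mul]
      simp only [Finset.sum_const_zero]
      omega
    · -- a ≥ 1
      have hterm : ∀ k ∈ Finset.range n,
          (n - k) * j k + padicValNat 2 (Nat.factorial (j k))
            ≤ min a (n - k) * j k + (n - k) * j k := by
        intro k hk
        have h1 : 1 ≤ n - k := by have := Finset.mem_range.mp hk; omega
        have h2 : 1 ≤ min a (n - k) := le_min ha1 h1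
        have h3 := padicValNat_two_factorial_le' (j k)
        have h4 : padicValNat 2 (Nat.factorial (j k)) ≤ j k := h3
        calc (n - k) * j k + padicValNat 2 (Nat.factorial (j k))
            ≤ (n - k) * j k + 1 * j k := by
              have := Nat.mul_le_mul_right (j k) h2
              omega
          _ ≤ (n - k) * j k + min a (n - k) * j k := by
              have := Nat.mul_le_mul_right (j k) h2
              omega
          _ = min a (n - k) * j k + (n - k) * j k := by ring
      have hsum := Finset.sum_le_sum hterm
      rw [Finset.sum_add_distrib, Finset.sum_add_distrib] at hsum
      omega
  have hfinal := Finset.sum_le_sum hperf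
  omega

lemma key_dvd' (m n : ℕ) (j : ℕ → ℕ) (hm : 1 ≤ m)
    (hc : ∑ k ∈ Finset.range n, (2 ^ (n - k) - 1) * j k = m + 1)
    (hN : ∀ k ∈ Finset.range n, NN m n j k ≠ 0) :
    ((m * (2 ^ (∑ k ∈ Finset.range n, (n - k) * j k)
        * ∏ k ∈ Finset.range n, Nat.factorial (j k)) : ℕ) : ℤ)
      ∣ 2 ^ (2 * m + 1) * ∏ k ∈ Finset.range n, NN m n j k := by
  set E : ℕ := ∑ k ∈ Finset.range n, (n - k) * j k with hE
  set A : ℕ := m * (2 ^ E * ∏ k ∈ Finset.range n, Nat.factorial (j k)) with hA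
  have hAne : A ≠ 0 := by
    apply Nat.mul_ne_zero (by omega)
    apply Nat.mul_ne_zero (by positivity)
    exact Finset.prod_ne_zero_iff.mpr fun k _ => Nat.factorial_ne_zero _
  have hPne : (∏ k ∈ Finset.range n, NN m n j k) ≠ 0 := Finset.prod_ne_zero_iff.mpr hN
  have hBZ : (2 ^ (2 * m + 1) * ∏ k ∈ Finset.range n, NN m n j k).natAbs
      = 2 ^ (2 * m + 1) * ∏ k ∈ Finset.range n, (NN m n j k).natAbs := by
    rw [Int.natAbs_mul, Int.natAbs_pow]
    congr 1
    exact map_prod Int.natAbsHom _ _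
  have hBne : (2 ^ (2 * m + 1) * ∏ k ∈ Finset.range n, (NN m n j k).natAbs) ≠ 0 := by
    apply Nat.mul_ne_zero (by positivity)
    exact Finset.prod_ne_zero_iff.mpr fun k hk => Int.natAbs_ne_zero.mpr (hN k hk)
  rw [Int.natCast_dvd, hBZ]
  rw [← Nat.factorization_le_iff_dvd hAne hBne]
  rw [Finsupp.le_def]
  intro p
  by_cases hp : p.Prime
  · haveI : Fact p.Prime := ⟨hp⟩
    have hfA : A.factorization p = padicValNat p m + padicValNat p (2 ^ E)
        + ∑ k ∈ Finset.range n, padicValNat p (Nat.factorial (j k)) := by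
      rw [hA, Nat.factorization_mul (by omega)
          (Nat.mul_ne_zero (by positivity)
            (Finset.prod_ne_zero_iff.mpr fun k _ => Nat.factorial_ne_zero _)),
        Nat.factorization_mul (by positivity)
          (Finset.prod_ne_zero_iff.mpr fun k _ => Nat.factorial_ne_zero _),
        Nat.factorization_prod fun k _ => Nat.factorial_ne_zero _]
      simp only [Finsupp.add_apply, Finset.sum_apply']
      rw [add_assoc]
      congr 1
      · exact Nat.factorization_def _ hp
      congr 1
      · exact Nat.factorization_def _ hp
      · exact Finset.sum_congr rfl fun k _ => Nat.factorization_def _ hp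
    have hfB : (2 ^ (2 * m + 1) * ∏ k ∈ Finset.range n, (NN m n j k).natAbs).factorization p
        = padicValNat p (2 ^ (2 * m + 1))
          + ∑ k ∈ Finset.range n, padicValNat p (NN m n j k).natAbs := by
      rw [Nat.factorization_mul (by positivity)
          (Finset.prod_ne_zero_iff.mpr fun k hk => Int.natAbs_ne_zero.mpr (hN k hk)),
        Nat.factorization_prod fun k hk => Int.natAbs_ne_zero.mpr (hN k hk)]
      simp only [Finsupp.add_apply, Finset.sum_apply']
      congr 1
      · exact Nat.factorization_def _ hp
      · exact Finset.sum_congr rfl fun k _ => Nat.factorization_def _ hp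
    rw [hfA, hfB]
    by_cases hp2 : p = 2
    · subst hp2
      rw [padicValNat.prime_pow, padicValNat.prime_pow]
      exact two_le' m n j hm hc hN
    · have h2E : padicValNat p (2 ^ E) = 0 := by
        apply padicValNat.eq_zero_of_not_dvd
        intro hdvd
        exact hp2 ((Nat.prime_dvd_prime_iff_eq hp Nat.prime_two).mp (hp.dvd_of_dvd_pow hdvd))
      have h2m : padicValNat p (2 ^ (2 * m + 1)) = 0 := by
        apply padicValNat.eq_zero_of_not_dvd
        intro hdvd
        exact hp2 ((Nat.prime_dvd_prime_iff_eq hp Nat.prime_two).mp (hp.dvd_of_dvd_pow hdvd))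
      rw [h2E, h2m, add_zero, zero_add]
      exact odd_le' p hp hp2 m n j hm hc hN
  · rw [Nat.factorization_eq_zero_of_not_prime _ hp]
    exact Nat.zero_le _

lemma term_int' (m n : ℕ) (j : ℕ → ℕ) (hm : 1 ≤ m)
    (hc : ∑ k ∈ Finset.range n, (2 ^ (n - k) - 1) * j k = m + 1) :
    ∃ z : ℤ, (2 : ℚ) ^ (2 * m + 1)
        * ∏ k ∈ Finset.range n, genBinom ((MM m n j k : ℚ) / 2 ^ (n - k)) (j k)
      = m * z := by
  by_cases hN : ∀ k ∈ Finset.range n, NN m n j k ≠ 0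
  · obtain ⟨z, hz⟩ := key_dvd' m n j hm hc hN
    refine ⟨z, ?_⟩
    have hstep : ∀ k ∈ Finset.range n, genBinom ((MM m n j k : ℚ) / 2 ^ (n - k)) (j k)
        = ((NN m n j k : ℤ) : ℚ) / ((2 : ℚ) ^ ((n - k) * j k) * ((Nat.factorial (j k) : ℕ) : ℚ)) :=
      fun k _ => genBinom_cast' (MM m n j k) (n - k) (j k)
    have hprod : ∏ k ∈ Finset.range n, genBinom ((MM m n j k : ℚ) / 2 ^ (n - k)) (j k)
        = ((∏ k ∈ Finset.range n, NN m n j k : ℤ) : ℚ)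
          / ((2 : ℚ) ^ (∑ k ∈ Finset.range n, (n - k) * j k)
            * ((∏ k ∈ Finset.range n, Nat.factorial (j k) : ℕ) : ℚ)) := by
      rw [Finset.prod_congr rfl hstep, Finset.prod_div_distrib, Int.cast_prod, Nat.cast_prod]
      congr 1
      rw [Finset.prod_mul_distrib, Finset.prod_pow_eq_pow_sum]
    have hD : ((2 : ℚ) ^ (∑ k ∈ Finset.range n, (n - k) * j k)
        * ((∏ k ∈ Finset.range n, Nat.factorial (j k) : ℕ) : ℚ)) ≠ 0 := by
      apply mul_ne_zero (by positivity)
      have : (∏ k ∈ Finset.range n, Nat.factorial (j k)) ≠ 0 :=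
        Finset.prod_ne_zero_iff.mpr fun k _ => Nat.factorial_ne_zero _
      exact_mod_cast Nat.cast_ne_zero.mpr this
    rw [hprod, mul_div_assoc', div_eq_iff hD]
    have hzQ := congrArg (Int.cast : ℤ → ℚ) hz
    push_cast at hzQ
    push_cast
    linear_combination hzQ
  · push_neg at hN
    obtain ⟨k0, hk0, hNk0⟩ := hN
    refine ⟨0, ?_⟩
    have hzero : genBinom ((MM m n j k0 : ℚ) / 2 ^ (n - k0)) (j k0) = 0 := by
      rw [genBinom_cast']
      have : ((NN m n j k0 : ℤ) : ℚ) = 0 := by rw [hNk0]; norm_num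
      rw [show (∏ t ∈ Finset.range (j k0), ((MM m n j k0 : ℤ) - t * 2 ^ (n - k0)) : ℤ)
        = NN m n j k0 from rfl, hNk0]
      norm_num
    rw [Finset.prod_eq_zero hk0 hzero]
    norm_num

end ES

theorem multibrotB_two_ewing_schober (m n : ℕ) (hm : 1 ≤ m) (hn : 1 ≤ n)
    (hmn : m ≤ 2 ^ (n + 1) - 3) :
    ∃ k : ℤ, (2 : ℚ) ^ (2 * m + 1) * multibrotB 2 m n = (k : ℚ) := by
  classical
  set F : (Fin n → ℕ) → ℚ := fun j =>
    if (∑ k : Fin n, ((2 : ℕ) ^ (n - k.val) - 1) * j k) = m + 1 then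
      ∏ k : Fin n,
        genBinom ((m : ℚ) / ((2 : ℕ) : ℚ) ^ (n - k.val)
          - ∑ l ∈ Finset.univ.filter (fun l : Fin n => l < k),
              ((2 : ℕ) : ℚ) ^ (k.val - l.val) * ((j l : ℕ) : ℚ)) (j k)
    else 0 with hF
  have hmul : multibrotB 2 m n = -(1 / (m : ℚ)) * ∑ᶠ j : Fin n → ℕ, F j := rfl
  -- termwise integrality
  have key : ∀ j : Fin n → ℕ, ∃ z : ℤ, (2 : ℚ) ^ (2 * m + 1) * F j = m * z := by
    intro j
    by_cases hcond : (∑ k : Fin n, ((2 : ℕ) ^ (n - k.val) - 1) * j k) = m + 1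
    · set j' : ℕ → ℕ := fun i => if h : i < n then j ⟨i, h⟩ else 0 with hj'
      have hj'val : ∀ k : Fin n, j' k.val = j k := by
        intro k
        simp [hj', k.isLt]
      have hc : ∑ k ∈ Finset.range n, (2 ^ (n - k) - 1) * j' k = m + 1 := by
        rw [← Fin.sum_univ_eq_sum_range (fun i => (2 ^ (n - i) - 1) * j' i) n]
        rw [← hcond]
        exact Finset.sum_congr rfl fun k _ => by rw [hj'val]
      have hbridge : F j = ∏ k ∈ Finset.range n,
          genBinom ((ES.MM m n j' k : ℚ) / 2 ^ (n - k)) (j' k) := by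
        rw [hF]
        simp only [if_pos hcond]
        rw [← Fin.prod_univ_eq_prod_range
          (fun i => genBinom ((ES.MM m n j' i : ℚ) / 2 ^ (n - i)) (j' i)) n]
        apply Finset.prod_congr rfl
        intro k _
        rw [hj'val]
        congr 1
        -- argument equality
        have h2 : ((2 : ℕ) : ℚ) = (2 : ℚ) := by norm_num
        rw [h2]
        have hMM : (ES.MM m n j' k.val : ℚ)
            = (m : ℚ) - ∑ l ∈ Finset.range k.val, (2 : ℚ) ^ (n - l) * (j' l : ℚ) := by
          rw [ES.MM]
          push_cast
          ring
        rw [hMM, sub_div]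
        congr 1
        have hstep1 : ∑ l ∈ Finset.univ.filter (fun l : Fin n => l < k),
            (2 : ℚ) ^ (k.val - l.val) * ((j l : ℕ) : ℚ)
            = ∑ l ∈ Finset.univ.filter (fun l : Fin n => l < k),
              (fun i => (2 : ℚ) ^ (k.val - i) * (j' i : ℚ)) l.val := by
          apply Finset.sum_congr rfl
          intro l _
          simp only [hj'val l]
        rw [hstep1, ES.fin_filter_sum' k (fun i => (2 : ℚ) ^ (k.val - i) * (j' i : ℚ)),
          Finset.sum_div]
        apply Finset.sum_congr rfl
        intro i hi
        have hik : i < k.val := Finset.mem_range.mp hi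
        have hkn : k.val < n := k.isLt
        have hexp : (2 : ℚ) ^ (n - i) = (2 : ℚ) ^ (k.val - i) * (2 : ℚ) ^ (n - k.val) := by
          rw [← pow_add]
          congr 1
          omega
        rw [hexp]
        field_simp
      obtain ⟨z, hz⟩ := ES.term_int' m n j' hm hc
      exact ⟨z, by rw [hbridge]; exact hz⟩
    · refine ⟨0, ?_⟩
      rw [hF]
      simp [if_neg hcond]
  choose zf hzf using key
  -- finite support
  set S : Finset (Fin n → ℕ) := Fintype.piFinset fun _ => Finset.range (m + 2) with hS
  have hsupp : Function.support F ⊆ ↑S := by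
    intro j hj
    rw [Function.mem_support] at hj
    by_cases hcond : (∑ k : Fin n, ((2 : ℕ) ^ (n - k.val) - 1) * j k) = m + 1
    · rw [hS, Fintype.coe_piFinset]
      intro k
      simp only [Finset.coe_range, Set.mem_Iio]
      have hterm : ((2 : ℕ) ^ (n - k.val) - 1) * j k ≤ m + 1 := by
        rw [← hcond]
        exact Finset.single_le_sum (f := fun i : Fin n => ((2 : ℕ) ^ (n - i.val) - 1) * j i)
          (fun i _ => Nat.zero_le _) (Finset.mem_univ k)
      have h1 : 1 ≤ n - k.val := by have := k.isLt; omega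
      have h2 : 2 ≤ 2 ^ (n - k.val) := by
        calc 2 = 2 ^ 1 := by norm_num
          _ ≤ 2 ^ (n - k.val) := Nat.pow_le_pow_right (by norm_num) h1
      have : j k ≤ (2 ^ (n - k.val) - 1) * j k := by
        calc j k = 1 * j k := (one_mul _).symm
          _ ≤ (2 ^ (n - k.val) - 1) * j k := Nat.mul_le_mul_right _ (by omega)
      omega
    · exact absurd (by rw [hF]; simp [if_neg hcond]) hj
  have hsum : ∑ᶠ j : Fin n → ℕ, F j = ∑ j ∈ S, F j :=
    finsum_eq_sum_of_support_subset F hsupp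
  refine ⟨-(∑ j ∈ S, zf j), ?_⟩
  rw [hmul, hsum]
  have hmne : (m : ℚ) ≠ 0 := by
    have : (0 : ℕ) < m := hm
    exact_mod_cast this.ne'
  have hdist : (2 : ℚ) ^ (2 * m + 1) * (-(1 / (m : ℚ)) * ∑ j ∈ S, F j)
      = -(1 / (m : ℚ)) * ∑ j ∈ S, ((2 : ℚ) ^ (2 * m + 1) * F j) := by
    rw [← Finset.mul_sum]
    ring
  rw [hdist]
  have hsum2 : ∑ j ∈ S, ((2 : ℚ) ^ (2 * m + 1) * F j) = ∑ j ∈ S, ((m : ℚ) * zf j) :=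
    Finset.sum_congr rfl fun j _ => hzf j
  rw [hsum2, ← Finset.mul_sum]
  push_cast
  field_simp
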